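/- Let A be the 3×3 matrix with rows (1,-5,4), (2,-5,3), (1,-5,4). Then A ∈ 𝒵 but the map F_A(x) = x + (Ax)^3 : ℝ³ → ℝ³ is not proper. Hence the claim 'for every A ∈ 𝒵, F_A is proper' is false. -/

import Mathlib

open Matrix

theorem stmt11 :
    (∀ (lam : ℝ) (x : Fin 3 → ℝ),
      x + (fun i => lam * ((!![(1:ℝ), -5, 4; 2, -5, 3; 1, -5, 4]).mulVec x i) ^ 3) = 0 →
      x = 0) ∧
    ¬ ∀ K : Set (Fin 3 → ℝ), IsCompact K →
        IsCompact ((fun x => x +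
          fun i => ((!![(1:ℝ), -5, 4; 2, -5, 3; 1, -5, 4]).mulVec x i) ^ 3) ⁻¹' K) := by
  constructor
  · intro lam x h
    have h0 := congrFun h 0
    have h1 := congrFun h 1
    have h2 := congrFun h 2
    simp [mulVec, dotProduct, Fin.sum_univ_three] at h0 h1 h2
    have e02 : x 0 = x 2 := by linarith
    have hAB : x 0 + -(5 * x 1) + 4 * x 2 = 2 * x 0 + -(5 * x 1) + 3 * x 2 := by linarith
    rw [← hAB] at h1
    have e01 : x 0 = x 1 := by linarith
    have hA : x 0 + -(5 * x 1) + 4 * x 2 = 0 := by linarith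
    rw [hA] at h0
    simp at h0
    funext i
    fin_cases i <;> simp <;> linarith
  · intro h
    have hK := h (Metric.closedBall 0 1) (isCompact_closedBall 0 1)
    obtain ⟨r, hr⟩ := hK.isBounded.subset_closedBall 0
    set γ : ℝ := max (r+1) 1 with hγdef
    have hγ1 : (1:ℝ) ≤ γ := le_max_right _ _
    have hγ0 : (0:ℝ) < γ := by linarith
    set v : Fin 3 → ℝ := ![γ^3 - 1/(15*γ), γ^3 + γ/5 - 1/(75*γ), γ^3] with hv
    have hFv : (v +
            fun i => ((!![(1:ℝ), -5, 4; 2, -5, 3; 1, -5, 4]).mulVec v i) ^ 3)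
        = ![-1/(15*γ), -2/(75*γ) - 1/(3375*γ^3), 0] := by
      funext i
      fin_cases i <;>
        simp [hv, mulVec, dotProduct, Fin.sum_univ_three] <;>
        field_simp <;> ring
    have hmem : v ∈ ((fun x => x +
            fun i => ((!![(1:ℝ), -5, 4; 2, -5, 3; 1, -5, 4]).mulVec x i) ^ 3) ⁻¹' (Metric.closedBall 0 1)) := by
      rw [Set.mem_preimage, hFv, Metric.mem_closedBall, dist_zero_right]
      apply pi_norm_le_iff_of_nonneg zero_le_one |>.mpr
      intro i
      have h115 : 1/(15*γ) ≤ 1/15 := by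
        apply div_le_div_of_nonneg_left (by norm_num) (by norm_num); linarith
      have h115' : 0 < 1/(15*γ) := by positivity
      have h175 : 2/(75*γ) ≤ 2/75 := by
        apply div_le_div_of_nonneg_left (by norm_num) (by norm_num); linarith
      have h175' : 0 < 2/(75*γ) := by positivity
      have hγ3 : (1:ℝ) ≤ γ^3 := by nlinarith [sq_nonneg (γ-1), sq_nonneg γ]
      have h3 : 1/(3375*γ^3) ≤ 1/3375 := by
        apply div_le_div_of_nonneg_left (by norm_num) (by norm_num); nlinarith
      have h3' : 0 < 1/(3375*γ^3) := by positivity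
      fin_cases i
      · simp only [Fin.mk_zero, Matrix.cons_val_zero, Real.norm_eq_abs]
        have he : (-1/(15*γ):ℝ) = -(1/(15*γ)) := by ring
        rw [he, abs_neg, abs_of_pos h115']; linarith
      · simp only [Fin.mk_one, Matrix.cons_val_one, Matrix.head_cons, Matrix.cons_val_zero, Real.norm_eq_abs]
        have he : (-2/(75*γ) - 1/(3375*γ^3):ℝ) = -(2/(75*γ) + 1/(3375*γ^3)) := by ring
        rw [he, abs_neg, abs_of_pos (by positivity)]; linarith
      · simp
    have hball := hr hmem
    rw [Metric.mem_closedBall, dist_zero_right] at hball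
    have hv2 : ‖v 2‖ ≤ ‖v‖ := norm_le_pi_norm v 2
    have hv2' : v 2 = γ^3 := by rw [hv]; simp
    rw [hv2', Real.norm_eq_abs, abs_of_pos (by positivity)] at hv2
    have hcube : γ ≤ γ^3 := by nlinarith [sq_nonneg (γ-1)]
    have hrγ : r + 1 ≤ γ := le_max_left _ _
    linarith
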